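/- arXiv:2108.03630 — 7 statements merged into one kernel-verified Lean document; each statement's English description precedes it below -/
import Mathlib

section
/- Let r be a rational function of degree N. For α ∈ Ω(r) (the set of α for which r(z) = α has N pairwise distinct roots), define the generalized backward-shift operator (R^{(r)}_α f)(z) = f(z)/(r(z) − α) − Σ_{n=1}^N f(w_n)/(r′(w_n)(z − w_n)), where w_1, …, w_N are the roots of r(z) = α. Then for α, β ∈ Ω(r) with α ≠ β, the resolvent identity R^{(r)}_α − R^{(r)}_β = (α − β) R^{(r)}_α R^{(r)}_β holds on functions analytic in a neighborhood of r⁻¹{α} ∪ r⁻¹{β}. -/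
open Polynomial

noncomputable section

/-- The rational function `r = p/q`, evaluated pointwise. -/
def ratEval (p q : Polynomial ℂ) (z : ℂ) : ℂ := p.eval z / q.eval z

/-- The generalized backward-shift operator
`(R^{(r)}_α f)(z) = f(z)/(r(z) − α) − Σₙ f(wₙ)/(r′(wₙ)(z − wₙ))`,
where `w 0, …, w (N-1)` are the roots of `r(z) = α`. -/
def Rop (p q : Polynomial ℂ) (α : ℂ) {N : ℕ} (w : Fin N → ℂ) (f : ℂ → ℂ) : ℂ → ℂ :=
  fun z => f z / (ratEval p q z - α)
    - ∑ n : Fin N, f (w n) / (deriv (ratEval p q) (w n) * (z - w n))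


lemma lagrange_sum {N : ℕ} (u : Fin N → ℂ) (hu : Function.Injective u)
    (S : ℂ[X]) (hS : S.degree < (N : WithBot ℕ)) (z : ℂ) :
    S.eval z = ∑ n : Fin N, S.eval (u n) *
      ∏ m ∈ Finset.univ.erase n, ((u n - u m)⁻¹ * (z - u m)) := by
  have h := Lagrange.eq_interpolate (s := (Finset.univ : Finset (Fin N))) (v := u)
    hu.injOn (by simpa using hS)
  conv_lhs => rw [h]
  rw [Lagrange.interpolate_apply, Polynomial.eval_finset_sum]
  refine Finset.sum_congr rfl fun n _ => ?_
  rw [eval_mul, eval_C, Lagrange.basis, Polynomial.eval_prod]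
  congr 1
  refine Finset.prod_congr rfl fun m _ => ?_
  simp [Lagrange.basisDivisor]

lemma factor_lemma (p q : ℂ[X]) (hco : IsCoprime p q) {N : ℕ} (hN : p.natDegree = N)
    (hdeg : q.natDegree ≤ p.natDegree) (hN1 : 1 ≤ N) (α : ℂ) (u : Fin N → ℂ)
    (hu : Function.Injective u) (hru : ∀ n, p.eval (u n) = α * q.eval (u n)) :
    ∃ c : ℂ, c ≠ 0 ∧ p - C α * q = C c * ∏ n : Fin N, (X - C (u n)) := by
  set P := p - C α * q with hPdef
  have hP0 : P ≠ 0 := by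
    intro h
    have hpq : p = C α * q := by rw [← sub_eq_zero]; exact h
    have hq : IsUnit q := hco.isUnit_of_dvd' ⟨C α, by rw [hpq, mul_comm]⟩ dvd_rfl
    have hq0 : q.natDegree = 0 := natDegree_eq_zero_of_isUnit hq
    have : p.natDegree = 0 := by
      rw [hpq]
      exact Nat.le_zero.mp ((natDegree_C_mul_le _ _).trans hq0.le)
    omega
  have hroots : (Finset.univ.val.map u : Multiset ℂ) ≤ P.roots := by
    rw [Multiset.le_iff_subset (Finset.univ.nodup.map hu)]
    intro x hx
    obtain ⟨n, _, rfl⟩ := Multiset.mem_map.mp hx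
    rw [mem_roots hP0]
    simp [IsRoot, hPdef, hru n]
  have hdvd : (∏ n : Fin N, (X - C (u n))) ∣ P := by
    have := (Multiset.prod_X_sub_C_dvd_iff_le_roots hP0 (Finset.univ.val.map u)).mpr hroots
    rw [Finset.prod_eq_multiset_prod]; rwa [Multiset.map_map] at this
  have hmonic : (∏ n : Fin N, (X - C (u n))).Monic :=
    monic_prod_of_monic _ _ fun n _ => monic_X_sub_C _
  have hdegprod : (∏ n : Fin N, (X - C (u n))).natDegree = N := by
    rw [natDegree_prod _ _ fun n _ => X_sub_C_ne_zero _]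
    simp
  have hdegP : P.natDegree ≤ N := by
    refine (natDegree_sub_le _ _).trans (max_le hN.le ?_)
    exact (natDegree_C_mul_le _ _).trans (hdeg.trans hN.le)
  have := eq_leadingCoeff_mul_of_monic_of_dvd_of_natDegree_le hmonic hdvd
    (by rw [hdegprod]; exact hdegP)
  exact ⟨P.leadingCoeff, leadingCoeff_ne_zero.mpr hP0, this⟩

lemma deriv_ratEval_at_root (p q : ℂ[X]) (α : ℂ) (w : ℂ) (hq : q.eval w ≠ 0)
    (hr : p.eval w = α * q.eval w) :
    deriv (ratEval p q) w = (p - C α * q).derivative.eval w / q.eval w := by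
  have hev : ratEval p q =ᶠ[nhds w] fun z => (p - C α * q).eval z / q.eval z + α := by
    have hopen : IsOpen {z : ℂ | q.eval z ≠ 0} := isOpen_ne.preimage q.continuous
    filter_upwards [hopen.mem_nhds hq] with z hz
    simp only [ratEval, eval_sub, eval_mul, eval_C]
    field_simp
    ring
  rw [hev.deriv_eq]
  have h1 : HasDerivAt (fun z => (p - C α * q).eval z / q.eval z + α)
      (((p - C α * q).derivative.eval w * q.eval w
        - (p - C α * q).eval w * q.derivative.eval w) / (q.eval w) ^ 2) w :=
    (((p - C α * q).hasDerivAt w).div (q.hasDerivAt w) hq).add_const α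
  rw [h1.deriv]
  have h0 : (p - C α * q).eval w = 0 := by simp [hr]
  rw [h0]
  field_simp
  ring

lemma deriv_prod_eval (c : ℂ) {N : ℕ} (u : Fin N → ℂ) (hu : Function.Injective u) (n : Fin N) :
    (C c * ∏ m : Fin N, (X - C (u m))).derivative.eval (u n)
      = c * ∏ m ∈ Finset.univ.erase n, (u n - u m) := by
  have hprod : (∏ m : Fin N, (X - C (u m)))
      = (Multiset.map (fun a => X - C a) (Finset.univ.val.map u)).prod := by
    rw [Finset.prod_eq_multiset_prod, Multiset.map_map]; rfl
  rw [derivative_C_mul, eval_mul, eval_C, hprod]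
  congr 1
  rw [eval_multiset_prod_X_sub_C_derivative
    (Multiset.mem_map_of_mem u (Finset.mem_univ_val n))]
  rw [← Multiset.map_erase u hu, Finset.prod_eq_multiset_prod, Multiset.map_map,
    Finset.erase_val]
  rfl

lemma key_identity (p q : ℂ[X]) {N : ℕ} (hN1 : 1 ≤ N)
    (α β : ℂ) (u : Fin N → ℂ) (hu : Function.Injective u)
    (hru : ∀ n, p.eval (u n) = α * q.eval (u n)) (hqu : ∀ n, q.eval (u n) ≠ 0)
    (c : ℂ) (hc : c ≠ 0) (hP : p - C α * q = C c * ∏ n : Fin N, (X - C (u n)))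
    (hdegβ : (p - C β * q).natDegree ≤ N)
    (w : ℂ) (hqw : q.eval w ≠ 0) (hrw : p.eval w = β * q.eval w)
    (z : ℂ) (hqz : q.eval z ≠ 0) (hzu : ∀ n, z ≠ u n) (hzw : z ≠ w)
    (huw : ∀ n, u n ≠ w) :
    (ratEval p q z - β) / ((ratEval p q z - α) * (z - w))
      = (α - β) * ∑ n : Fin N, 1 / (deriv (ratEval p q) (u n) * (u n - w) * (z - u n)) := by
  have ha : ∀ n, deriv (ratEval p q) (u n)
      = c * (∏ m ∈ Finset.univ.erase n, (u n - u m)) / q.eval (u n) := fun n => by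
    rw [deriv_ratEval_at_root p q α (u n) (hqu n) (hru n), hP, deriv_prod_eval c u hu n]
  have hroot : (p - C β * q).IsRoot w := by simp [IsRoot, hrw]
  set S := (p - C β * q) /ₘ (X - C w) with hSdef
  have hSP : (X - C w) * S = p - C β * q := mul_divByMonic_eq_iff_isRoot.mpr hroot
  have hdS : S.degree < (N : WithBot ℕ) := by
    have h1 : S.natDegree < N := by
      rw [hSdef, natDegree_divByMonic _ (monic_X_sub_C w), natDegree_X_sub_C]
      omega
    exact lt_of_le_of_lt degree_le_natDegree (by exact_mod_cast h1)
  have hSz : ∀ x : ℂ, (x - w) * S.eval x = p.eval x - β * q.eval x := fun x => by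
    have := congrArg (eval x) hSP
    simpa using this
  have hSun : ∀ n, S.eval (u n) = (α - β) * q.eval (u n) / (u n - w) := fun n => by
    have h := hSz (u n)
    rw [hru n] at h
    rw [eq_div_iff (sub_ne_zero.mpr (huw n))]
    linear_combination h
  have hAz : p.eval z - α * q.eval z = c * ∏ n : Fin N, (z - u n) := by
    have := congrArg (eval z) hP
    simpa [eval_prod] using this
  have hprod_ne : (∏ n : Fin N, (z - u n)) ≠ 0 :=
    Finset.prod_ne_zero_iff.mpr fun n _ => sub_ne_zero.mpr (hzu n)
  have hA : ratEval p q z - α = c * (∏ n : Fin N, (z - u n)) / q.eval z := by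
    rw [ratEval, eq_div_iff hqz, sub_mul, div_mul_cancel₀ _ hqz]
    linear_combination hAz
  have hB : ratEval p q z - β = (z - w) * S.eval z / q.eval z := by
    rw [ratEval, eq_div_iff hqz, sub_mul, div_mul_cancel₀ _ hqz]
    linear_combination -(hSz z)
  have hzw' : z - w ≠ 0 := sub_ne_zero.mpr hzw
  calc (ratEval p q z - β) / ((ratEval p q z - α) * (z - w))
      = S.eval z / (c * ∏ n : Fin N, (z - u n)) := by
        rw [hA, hB]
        field_simp
    _ = ∑ n : Fin N, (S.eval (u n) * ∏ m ∈ Finset.univ.erase n, ((u n - u m)⁻¹ * (z - u m)))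
          / (c * ∏ k : Fin N, (z - u k)) := by
        rw [lagrange_sum u hu S hdS z, Finset.sum_div]
    _ = (α - β) * ∑ n : Fin N, 1 / (deriv (ratEval p q) (u n) * (u n - w) * (z - u n)) := by
        rw [Finset.mul_sum]
        refine Finset.sum_congr rfl fun n _ => ?_
        rw [ha n, hSun n, Finset.prod_mul_distrib, Finset.prod_inv_distrib,
          ← Finset.mul_prod_erase _ _ (Finset.mem_univ n)]
        have hD : (∏ m ∈ Finset.univ.erase n, (u n - u m)) ≠ 0 :=
          Finset.prod_ne_zero_iff.mpr fun m hm =>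
            sub_ne_zero.mpr fun h => (Finset.mem_erase.mp hm).1 (hu h.symm)
        have hE : (∏ m ∈ Finset.univ.erase n, (z - u m)) ≠ 0 :=
          Finset.prod_ne_zero_iff.mpr fun m _ => sub_ne_zero.mpr (hzu m)
        have hzun : z - u n ≠ 0 := sub_ne_zero.mpr (hzu n)
        have hunw : u n - w ≠ 0 := sub_ne_zero.mpr (huw n)
        field_simp

lemma final_alg (F S1 S2 T R α β : ℂ) (hA : R - α ≠ 0) (hB : R - β ≠ 0) (hab : α - β ≠ 0)
    (h : S1 + (α - β) * S1 / (R - α) = (α - β) * T) :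
    (F / (R - α) - S2) - (F / (R - β) - S1)
      = (α - β) * ((F / (R - β) - S1) / (R - α) - ((α - β)⁻¹ * S2 - T)) := by
  linear_combination h + S2 * (mul_inv_cancel₀ hab) + F * (R - β)⁻¹ * (mul_inv_cancel₀ hA)
    - F * (R - α)⁻¹ * (mul_inv_cancel₀ hB)

set_option maxHeartbeats 2000000 in

/-- the resolvent identity
`R^{(r)}_α − R^{(r)}_β = (α − β) R^{(r)}_α R^{(r)}_β` for `α, β ∈ Ω(r)`, `α ≠ β`,
on functions analytic in a neighborhood of `r⁻¹{α} ∪ r⁻¹{β}`. -/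
theorem stmt2 (p q : Polynomial ℂ) (hco : IsCoprime p q) (N : ℕ)
    (hN : p.natDegree = N) (hdeg : q.natDegree ≤ p.natDegree)
    (α β : ℂ) (hαβ : α ≠ β)
    (u : Fin N → ℂ) (hu : Function.Injective u)
    (hru : ∀ n, p.eval (u n) = α * q.eval (u n)) (hqu : ∀ n, q.eval (u n) ≠ 0)
    (v : Fin N → ℂ) (hv : Function.Injective v)
    (hrv : ∀ n, p.eval (v n) = β * q.eval (v n)) (hqv : ∀ n, q.eval (v n) ≠ 0)
    (f : ℂ → ℂ) (hf : ∀ n, AnalyticAt ℂ f (u n) ∧ AnalyticAt ℂ f (v n)) :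
    ∀ z : ℂ, q.eval z ≠ 0 → ratEval p q z ≠ α → ratEval p q z ≠ β →
      Rop p q α u f z - Rop p q β v f z
        = (α - β) * Rop p q α u (Rop p q β v f) z := by
  intro z hqz hzα hzβ
  have hA : ratEval p q z - α ≠ 0 := sub_ne_zero.mpr hzα
  have hB : ratEval p q z - β ≠ 0 := sub_ne_zero.mpr hzβ
  have hab : α - β ≠ 0 := sub_ne_zero.mpr hαβ
  rcases Nat.eq_zero_or_pos N with hN0 | hN1
  · subst hN0
    simp only [Rop, Finset.univ_eq_empty, Finset.sum_empty, sub_zero]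
    field_simp
    ring
  · obtain ⟨c, hc, hPα⟩ := factor_lemma p q hco hN hdeg hN1 α u hu hru
    obtain ⟨d, hd, hPβ⟩ := factor_lemma p q hco hN hdeg hN1 β v hv hrv
    have hrualpha : ∀ n, ratEval p q (u n) = α := fun n => by
      rw [ratEval, hru n, mul_div_assoc, div_self (hqu n), mul_one]
    have hrvbeta : ∀ m, ratEval p q (v m) = β := fun m => by
      rw [ratEval, hrv m, mul_div_assoc, div_self (hqv m), mul_one]
    have hzu : ∀ n, z ≠ u n := fun n h => hzα (by rw [h, hrualpha n])
    have hzv : ∀ m, z ≠ v m := fun m h => hzβ (by rw [h, hrvbeta m])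
    have huv : ∀ n m, u n ≠ v m := fun n m h => hαβ (by rw [← hrualpha n, h, hrvbeta m])
    have hdegβ : (p - C β * q).natDegree ≤ N :=
      (natDegree_sub_le _ _).trans
        (max_le hN.le ((natDegree_C_mul_le _ _).trans (hdeg.trans hN.le)))
    have hb : ∀ m, deriv (ratEval p q) (v m) ≠ 0 := fun m => by
      rw [deriv_ratEval_at_root p q β (v m) (hqv m) (hrv m), hPβ, deriv_prod_eval d v hv m]
      refine div_ne_zero (mul_ne_zero hd ?_) (hqv m)
      exact Finset.prod_ne_zero_iff.mpr fun k hk =>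
        sub_ne_zero.mpr fun h => (Finset.mem_erase.mp hk).1 (hv h.symm)
    have ha : ∀ n, deriv (ratEval p q) (u n) ≠ 0 := fun n => by
      rw [deriv_ratEval_at_root p q α (u n) (hqu n) (hru n), hPα, deriv_prod_eval c u hu n]
      refine div_ne_zero (mul_ne_zero hc ?_) (hqu n)
      exact Finset.prod_ne_zero_iff.mpr fun k hk =>
        sub_ne_zero.mpr fun h => (Finset.mem_erase.mp hk).1 (hu h.symm)
    have key : ∀ m : Fin N, (ratEval p q z - β) / ((ratEval p q z - α) * (z - v m))
        = (α - β) * ∑ n : Fin N,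
            1 / (deriv (ratEval p q) (u n) * (u n - v m) * (z - u n)) :=
      fun m => key_identity p q hN1 α β u hu hru hqu c hc hPα hdegβ (v m) (hqv m) (hrv m)
        z hqz hzu (hzv m) (fun n => huv n m)
    have algebra1 : ∀ F G D A x : ℂ, G ≠ 0 → D ≠ 0 → A ≠ 0 →
        F/(G*D) + x*(F/(G*D))/A = ((A+x)/(A*D))*(F/G) := by
      intros F G D A x hG hD hA'
      field_simp
    have key2 : ∀ m : Fin N,
        f (v m) / (deriv (ratEval p q) (v m) * (z - v m))
          + (α - β) * (f (v m) / (deriv (ratEval p q) (v m) * (z - v m)))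
              / (ratEval p q z - α)
        = (α - β) * ∑ n : Fin N,
            (f (v m) / (deriv (ratEval p q) (v m) * (u n - v m)))
              / (deriv (ratEval p q) (u n) * (z - u n)) := by
      intro m
      have hzvm : z - v m ≠ 0 := sub_ne_zero.mpr (hzv m)
      have hbm := hb m
      calc f (v m) / (deriv (ratEval p q) (v m) * (z - v m))
          + (α - β) * (f (v m) / (deriv (ratEval p q) (v m) * (z - v m)))
              / (ratEval p q z - α)
          = ((ratEval p q z - α + (α - β)) / ((ratEval p q z - α) * (z - v m)))
              * (f (v m) / deriv (ratEval p q) (v m)) :=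
            algebra1 _ _ _ _ _ hbm hzvm hA
        _ = ((ratEval p q z - β) / ((ratEval p q z - α) * (z - v m)))
              * (f (v m) / deriv (ratEval p q) (v m)) := by
            rw [show ratEval p q z - α + (α - β) = ratEval p q z - β from by ring]
        _ = ((α - β) * ∑ n : Fin N,
              1 / (deriv (ratEval p q) (u n) * (u n - v m) * (z - u n)))
              * (f (v m) / deriv (ratEval p q) (v m)) := by rw [key m]
        _ = (α - β) * ∑ n : Fin N,
              (f (v m) / (deriv (ratEval p q) (v m) * (u n - v m)))
                / (deriv (ratEval p q) (u n) * (z - u n)) := by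
            rw [mul_assoc, Finset.sum_mul]
            congr 1
            refine Finset.sum_congr rfl fun n _ => ?_
            have han := ha n
            have huvnm : u n - v m ≠ 0 := sub_ne_zero.mpr (huv n m)
            have hzun : z - u n ≠ 0 := sub_ne_zero.mpr (hzu n)
            field_simp
    have hsum : (∑ m : Fin N, f (v m) / (deriv (ratEval p q) (v m) * (z - v m)))
        + (α - β) * (∑ m : Fin N, f (v m) / (deriv (ratEval p q) (v m) * (z - v m)))
            / (ratEval p q z - α)
        = (α - β) * ∑ n : Fin N,
            (∑ m : Fin N, f (v m) / (deriv (ratEval p q) (v m) * (u n - v m)))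
              / (deriv (ratEval p q) (u n) * (z - u n)) := by
      have h := Finset.sum_congr rfl (fun m (_ : m ∈ (Finset.univ : Finset (Fin N))) => key2 m)
      rw [Finset.sum_add_distrib] at h
      have e1 : ∑ m : Fin N, (α - β) * (f (v m) / (deriv (ratEval p q) (v m) * (z - v m)))
            / (ratEval p q z - α)
          = (α - β) * (∑ m : Fin N, f (v m) / (deriv (ratEval p q) (v m) * (z - v m)))
            / (ratEval p q z - α) := by
        rw [← Finset.sum_div, ← Finset.mul_sum]
      have e2 : ∑ m : Fin N, (α - β) * ∑ n : Fin N,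
            (f (v m) / (deriv (ratEval p q) (v m) * (u n - v m)))
              / (deriv (ratEval p q) (u n) * (z - u n))
          = (α - β) * ∑ n : Fin N,
            (∑ m : Fin N, f (v m) / (deriv (ratEval p q) (v m) * (u n - v m)))
              / (deriv (ratEval p q) (u n) * (z - u n)) := by
        rw [← Finset.mul_sum, Finset.sum_comm]
        congr 1
        exact Finset.sum_congr rfl fun n _ => (Finset.sum_div _ _ _).symm
      rw [e1, e2] at h
      exact h
    have hsplit : ∑ n : Fin N, (f (u n) / (α - β)
          - ∑ m : Fin N, f (v m) / (deriv (ratEval p q) (v m) * (u n - v m)))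
            / (deriv (ratEval p q) (u n) * (z - u n))
        = (α - β)⁻¹ * (∑ n : Fin N, f (u n) / (deriv (ratEval p q) (u n) * (z - u n)))
          - ∑ n : Fin N, (∑ m : Fin N, f (v m) / (deriv (ratEval p q) (v m) * (u n - v m)))
              / (deriv (ratEval p q) (u n) * (z - u n)) := by
      rw [Finset.mul_sum, ← Finset.sum_sub_distrib]
      exact Finset.sum_congr rfl fun n _ => by ring
    simp only [Rop]
    simp only [hrualpha]
    rw [hsplit]
    exact final_alg (f z) _ _ _ (ratEval p q z) α β hA hB hab hsum

end
end

section
/- Let r be a rational function of degree N, α ∈ Ω(r), and let w_1, …, w_N be the N distinct roots of r(z) = α. Then the N × N matrix G with entries g_{nj} = e_n(w_j), where e_1, …, e_N is a basis of the state space 𝔏(r), is invertible. -/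
open Polynomial

noncomputable section

/-- The difference quotient `z ↦ (r(z) − r(a))/(z − a)` (equal to `r′(a)` at `z = a`). -/
def dq (p q : Polynomial ℂ) (a : ℂ) : ℂ → ℂ :=
  fun z => if z = a then deriv (ratEval p q) a
           else (ratEval p q z - ratEval p q a) / (z - a)

/-- The state space `𝔏(r)`: the span of the difference quotients of `r = p/q`. -/
def stateSpace (p q : Polynomial ℂ) : Submodule ℂ (ℂ → ℂ) :=
  Submodule.span ℂ {f | ∃ a : ℂ, q.eval a ≠ 0 ∧ f = dq p q a}

/-- for `α ∈ Ω(r)` with distinct preimages `w 0, …, w (N-1)` and a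
basis `e 0, …, e (N-1)` of `𝔏(r)`, the matrix `(e n (w j))` is invertible. -/
theorem stmt6 (p q : Polynomial ℂ) (hco : IsCoprime p q) (N : ℕ)
    (hN : p.natDegree = N) (hdeg : q.natDegree ≤ p.natDegree)
    (e : Fin N → (ℂ → ℂ)) (hmem : ∀ n, e n ∈ stateSpace p q)
    (hli : LinearIndependent ℂ e)
    (hspan : Submodule.span ℂ (Set.range e) = stateSpace p q)
    (α : ℂ) (w : Fin N → ℂ) (hw : Function.Injective w)
    (hroot : ∀ n, p.eval (w n) = α * q.eval (w n)) (hq : ∀ n, q.eval (w n) ≠ 0) :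
    (Matrix.of fun n j : Fin N => e n (w j)).det ≠ 0 := by
  rcases Nat.eq_zero_or_pos N with rfl | hNpos
  · simp [Matrix.det_isEmpty]
  by_contra hdet
  obtain ⟨d, hd0, hdv⟩ := (Matrix.exists_mulVec_eq_zero_iff).mpr hdet
  -- the functional kills every element of the state space
  set ℓ : (ℂ → ℂ) →ₗ[ℂ] ℂ := ∑ j, d j • LinearMap.proj (w j) with hℓdef
  have hℓ_apply : ∀ f : ℂ → ℂ, ℓ f = ∑ j, d j * f (w j) := by
    intro f
    simp [hℓdef, LinearMap.sum_apply]
  have hker : ∀ f ∈ stateSpace p q, ℓ f = 0 := by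
    have hle : stateSpace p q ≤ LinearMap.ker ℓ := by
      rw [← hspan, Submodule.span_le]
      rintro _ ⟨n, rfl⟩
      simp only [SetLike.mem_coe, LinearMap.mem_ker]
      have h1 := congrFun hdv n
      simp only [Matrix.mulVec, dotProduct, Matrix.of_apply, Pi.zero_apply] at h1
      rw [hℓ_apply, ← h1]
      exact Finset.sum_congr rfl fun j _ => mul_comm _ _
    exact fun f hf => hle hf
  have hqne : q ≠ 0 := fun h => hq ⟨0, hNpos⟩ (by simp [h])
  have hpq : p - C α * q ≠ 0 := by
    intro h
    have hp : p = C α * q := sub_eq_zero.mp h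
    have hqu : IsUnit q := hco.isUnit_of_dvd' ⟨C α, by rw [hp, mul_comm]⟩ dvd_rfl
    have h0 : q.natDegree = 0 := natDegree_eq_zero_of_isUnit hqu
    have : p.natDegree ≤ 0 := by
      rw [hp]
      exact (natDegree_mul_le).trans (by simp [h0])
    omega
  -- the bad set is finite
  have hBfin : (({a | q.eval a = 0} ∪ {a | (p - C α * q).eval a = 0}) ∪ Set.range w).Finite := by
    apply Set.Finite.union
    · exact (Polynomial.finite_setOf_isRoot hqne).union (Polynomial.finite_setOf_isRoot hpq)
    · exact Set.finite_range w
  -- the key polynomial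
  set F : Polynomial ℂ := ∑ j, C (d j) * ∏ k ∈ Finset.univ.erase j, (C (w k) - X) with hFdef
  have hFeval : ∀ a : ℂ, F.eval a = ∑ j, d j * ∏ k ∈ Finset.univ.erase j, (w k - a) := by
    intro a
    simp [hFdef, eval_finset_sum, eval_prod]
  have hFroot : ∀ a : ℂ, a ∉ (({a | q.eval a = 0} ∪ {a | (p - C α * q).eval a = 0}) ∪ Set.range w)
      → F.eval a = 0 := by
    intro a ha
    simp only [Set.mem_union, Set.mem_setOf_eq, Set.mem_range, not_or, not_exists] at ha
    obtain ⟨⟨hqa, hpa⟩, hwa⟩ := ha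
    -- ℓ (dq p q a) = 0
    have hmem' : dq p q a ∈ stateSpace p q := Submodule.subset_span ⟨a, hqa, rfl⟩
    have hz := hker _ hmem'
    rw [hℓ_apply] at hz
    have hwja : ∀ j, w j ≠ a := fun j h => hwa j h
    have hrw : ∀ j, ratEval p q (w j) = α := by
      intro j
      rw [ratEval, hroot j, mul_div_assoc, div_self (hq j), mul_one]
    have hdq : ∀ j, dq p q a (w j) = (α - ratEval p q a) / (w j - a) := by
      intro j
      rw [dq]
      simp only [hwja j, if_false, hrw j]
    rw [Finset.sum_congr rfl (fun j _ => by rw [hdq j])] at hz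
    have hαc : α - ratEval p q a ≠ 0 := by
      rw [sub_ne_zero]
      intro h
      apply hpa
      rw [eval_sub, eval_mul, eval_C, sub_eq_zero]
      rw [ratEval] at h
      field_simp at h
      linear_combination -h
    have hs : ∑ j, d j / (w j - a) = 0 := by
      have : ∑ j, d j * ((α - ratEval p q a) / (w j - a))
          = (α - ratEval p q a) * ∑ j, d j / (w j - a) := by
        rw [Finset.mul_sum]
        exact Finset.sum_congr rfl fun j _ => by ring
      rw [this] at hz
      exact (mul_eq_zero.mp hz).resolve_left hαc
    have hprod : ∀ j : Fin N, (w j - a) ≠ 0 := fun j => sub_ne_zero.mpr (hwja j)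
    rw [hFeval]
    have : ∀ j : Fin N, d j * ∏ k ∈ Finset.univ.erase j, (w k - a)
        = (d j / (w j - a)) * ∏ k, (w k - a) := by
      intro j
      rw [← Finset.mul_prod_erase Finset.univ _ (Finset.mem_univ j),
        div_mul_eq_mul_div, mul_div_assoc, mul_div_cancel_left₀ _ (hprod j)]
    rw [Finset.sum_congr rfl (fun j _ => this j), ← Finset.sum_mul, hs, zero_mul]
  have hF0 : F = 0 := by
    apply Polynomial.eq_zero_of_infinite_isRoot
    apply Set.Infinite.mono (s := (({a | q.eval a = 0} ∪ {a | (p - C α * q).eval a = 0}) ∪ Set.range w)ᶜ)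
    · intro a ha
      exact hFroot a ha
    · exact hBfin.infinite_compl
  -- conclude d = 0
  apply hd0
  funext i
  have h0 := congrArg (fun P => Polynomial.eval (w i) P) hF0
  simp only [eval_zero] at h0
  rw [hFeval] at h0
  have hsum : ∀ j ∈ Finset.univ, j ≠ i →
      d j * ∏ k ∈ Finset.univ.erase j, (w k - w i) = 0 := by
    intro j _ hji
    have : (w i - w i) = 0 := sub_self _
    rw [Finset.prod_eq_zero (Finset.mem_erase.mpr ⟨hji.symm ∘ (fun h => h), Finset.mem_univ i⟩) this, mul_zero]
  rw [Finset.sum_eq_single i hsum (fun h => absurd (Finset.mem_univ i) h)] at h0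
  have hprodi : ∏ k ∈ Finset.univ.erase i, (w k - w i) ≠ 0 := by
    apply Finset.prod_ne_zero_iff.mpr
    intro k hk
    exact sub_ne_zero.mpr fun h => (Finset.mem_erase.mp hk).1 (hw h)
  have := (mul_eq_zero.mp h0).resolve_right hprodi
  simpa using this

end
end

section
/- Let r be a rational function of degree N, α ∈ Ω(r) with distinct preimages w_1,…,w_N, and let F_1, …, F_N be functions analytic in a connected open neighborhood Ω of α. If Σ_{n=1}^N e_n(z) F_n(r(z)) ≡ 0 for all z ∈ r⁻¹(Ω), then F_n ≡ 0 on Ω for every n. -/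
open Polynomial

noncomputable section

lemma keyA (p q : Polynomial ℂ) {N : ℕ} (hN : p.natDegree = N) (hNpos : 0 < N)
    (hdeg : q.natDegree ≤ N) (a : ℂ) (ha : q.eval a ≠ 0) :
    ∃ u : Polynomial ℂ, u.degree < N ∧
      (X - C a) * u = p - C (ratEval p q a) * q ∧
      ∀ z, q.eval z ≠ 0 → dq p q a z = u.eval z / q.eval z := by
  obtain ⟨u, hu⟩ : (X - C a) ∣ (p - C (ratEval p q a) * q) := by
    refine dvd_iff_isRoot.mpr ?_
    simp only [IsRoot, eval_sub, eval_mul, eval_C, ratEval]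
    field_simp
    simp
  have hdegu : u.degree < N := by
    rcases eq_or_ne u 0 with h | h
    · simp [h]
    · have h1 : degree ((X - C a) * u) ≤ N := by
        rw [← hu]
        refine le_trans (degree_sub_le _ _) (max_le ?_ ?_)
        · exact le_trans (degree_le_natDegree) (by exact_mod_cast hN.le)
        · refine le_trans (degree_mul_le _ _) ?_
          refine le_trans (add_le_add (degree_C_le) (degree_le_natDegree)) ?_
          simpa using (by exact_mod_cast hdeg : (q.natDegree : WithBot ℕ) ≤ N)
      rw [degree_mul, degree_X_sub_C] at h1
      rw [degree_eq_natDegree h] at h1 ⊢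
      have : (1 + u.natDegree : ℕ) ≤ N := by exact_mod_cast h1
      exact_mod_cast by omega
  refine ⟨u, hdegu, hu.symm, ?_⟩
  intro z hz
  rcases eq_or_ne z a with rfl | hza
  · have hder : deriv (ratEval p q) z =
        (p.derivative.eval z * q.eval z - p.eval z * q.derivative.eval z) / (q.eval z) ^ 2 := by
      have : ratEval p q = fun y => p.eval y / q.eval y := rfl
      rw [this, deriv_fun_div (Polynomial.differentiableAt p) (Polynomial.differentiableAt q) hz]
      simp [Polynomial.deriv]
    have hua : u.eval z = p.derivative.eval z - ratEval p q z * q.derivative.eval z := by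
      have h1 := congrArg (fun f => Polynomial.eval z (Polynomial.derivative f)) hu
      simp only [derivative_sub, derivative_mul, derivative_X_sub_C, derivative_C,
        derivative_X, eval_sub, eval_add, eval_mul, eval_C, eval_zero, eval_one, one_mul,
        mul_zero, zero_mul, mul_one, sub_zero, add_zero, eval_X, sub_self] at h1
      linear_combination -h1
    have : dq p q z z = deriv (ratEval p q) z := by simp [dq]
    rw [this, hder, hua]
    have hq2 : eval z q ^ 2 ≠ 0 := pow_ne_zero _ hz
    rw [div_eq_div_iff hq2 hz]
    unfold ratEval
    field_simp
  · have h1 := congrArg (Polynomial.eval z) hu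
    simp only [eval_sub, eval_mul, eval_C, eval_X] at h1
    have : dq p q a z = (ratEval p q z - ratEval p q a) / (z - a) := by simp [dq, hza]
    rw [this]
    unfold ratEval at h1 ⊢
    have hza' : z - a ≠ 0 := sub_ne_zero.mpr hza
    field_simp at h1 ⊢
    linear_combination h1

lemma keyB (p q : Polynomial ℂ) {N : ℕ} (hN : p.natDegree = N) (hNpos : 0 < N)
    (hdeg : q.natDegree ≤ N) {f : ℂ → ℂ} (hf : f ∈ stateSpace p q) :
    ∃ u : Polynomial ℂ, u.degree < N ∧ ∀ z, q.eval z ≠ 0 → f z = u.eval z / q.eval z := by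
  induction hf using Submodule.span_induction with
  | mem x hx =>
      obtain ⟨a, ha, rfl⟩ := hx
      obtain ⟨u, h1, _, h3⟩ := keyA p q hN hNpos hdeg a ha
      exact ⟨u, h1, h3⟩
  | zero =>
      refine ⟨0, ?_, by simp⟩
      rw [degree_zero]
      exact_mod_cast WithBot.bot_lt_coe N
  | add x y _ _ hx hy =>
      obtain ⟨u, hu1, hu2⟩ := hx
      obtain ⟨v, hv1, hv2⟩ := hy
      refine ⟨u + v, lt_of_le_of_lt (degree_add_le _ _) (max_lt hu1 hv1), fun z hz => ?_⟩
      simp [Pi.add_apply, hu2 z hz, hv2 z hz, eval_add, add_div]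
  | smul c x _ hx =>
      obtain ⟨u, hu1, hu2⟩ := hx
      refine ⟨C c * u, lt_of_le_of_lt ?_ hu1, fun z hz => ?_⟩
      · refine le_trans (degree_mul_le _ _) ?_
        calc degree (C c) + degree u ≤ 0 + degree u := add_le_add degree_C_le le_rfl
        _ = degree u := by simp
      · simp only [Pi.smul_apply, smul_eq_mul, hu2 z hz, eval_mul, eval_C]
        ring

open Topology Filter

set_option maxHeartbeats 1600000 in
/-- if `F 0, …, F (N-1)` are analytic in a connected open
neighborhood `Ω` of `α ∈ Ω(r)` and `Σₙ eₙ(z) Fₙ(r(z)) ≡ 0` on `r⁻¹(Ω)`, then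
every `Fₙ` vanishes identically on `Ω`. -/
theorem stmt7 (p q : Polynomial ℂ) (hco : IsCoprime p q) (N : ℕ)
    (hN : p.natDegree = N) (hdeg : q.natDegree ≤ p.natDegree)
    (e : Fin N → (ℂ → ℂ)) (hmem : ∀ n, e n ∈ stateSpace p q)
    (hli : LinearIndependent ℂ e)
    (hspan : Submodule.span ℂ (Set.range e) = stateSpace p q)
    (α : ℂ) (w : Fin N → ℂ) (hw : Function.Injective w)
    (hroot : ∀ n, p.eval (w n) = α * q.eval (w n)) (hq : ∀ n, q.eval (w n) ≠ 0)
    (Ω : Set ℂ) (hΩ : IsOpen Ω) (hconn : IsConnected Ω) (hα : α ∈ Ω)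
    (F : Fin N → ℂ → ℂ) (hF : ∀ n, AnalyticOnNhd ℂ (F n) Ω)
    (hvan : ∀ z : ℂ, q.eval z ≠ 0 → ratEval p q z ∈ Ω →
      ∑ n : Fin N, e n z * F n (ratEval p q z) = 0) :
    ∀ n, ∀ x ∈ Ω, F n x = 0 := by

  rcases Nat.eq_zero_or_pos N with hN0 | hNpos
  · subst hN0; exact fun n => n.elim0
  have m0 : Fin N := ⟨0, hNpos⟩
  rw [hN] at hdeg
  have hqne : q ≠ 0 := fun h => hq m0 (by simp [h])
  have hpqne : p - C α * q ≠ 0 := by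
    intro h
    have hpq : p = C α * q := by linear_combination h
    have : IsUnit q := hco.isUnit_of_dvd' ⟨C α, by rw [hpq]; ring⟩ dvd_rfl
    have hq0 : q.natDegree = 0 := (Polynomial.natDegree_eq_zero_of_isUnit this)
    have : p.natDegree = 0 := by
      rw [hpq]
      exact le_antisymm (le_trans (natDegree_mul_le) (by simp [hq0])) (Nat.zero_le _)
    omega
  -- each e n is u n / q on the set where q ≠ 0
  have hU : ∀ n, ∃ u : Polynomial ℂ, u.degree < N ∧
      ∀ z, q.eval z ≠ 0 → e n z = u.eval z / q.eval z :=
    fun n => keyB p q hN hNpos hdeg (hmem n)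
  choose u hudeg hueq using hU
  -- polynomials agreeing off the zeros of q are equal
  have hSinf : {z : ℂ | q.eval z ≠ 0}.Infinite := by
    have : {z : ℂ | q.eval z = 0}.Finite := q.finite_setOf_isRoot hqne
    simpa [Set.compl_setOf] using this.infinite_compl
  have poly_eq : ∀ v₁ v₂ : Polynomial ℂ,
      (∀ z, q.eval z ≠ 0 → v₁.eval z = v₂.eval z) → v₁ = v₂ := by
    intro v₁ v₂ h
    have : v₁ - v₂ = 0 := by
      apply Polynomial.eq_zero_of_infinite_isRoot
      apply hSinf.mono
      intro z hz
      simp only [Set.mem_setOf_eq, IsRoot, eval_sub, sub_eq_zero]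
      exact h z hz
    linear_combination this
  -- difference quotients at the w k
  have hrw : ∀ k, ratEval p q (w k) = α := by
    intro k; unfold ratEval; rw [hroot k, mul_div_assoc, div_self (hq k), mul_one]
  have hdqw : ∀ k, ∃ uw : Polynomial ℂ, uw.degree < N ∧
      (X - C (w k)) * uw = p - C α * q ∧
      ∀ z, q.eval z ≠ 0 → dq p q (w k) z = uw.eval z / q.eval z := by
    intro k
    obtain ⟨uw, h1, h2, h3⟩ := keyA p q hN hNpos hdeg (w k) (hq k)
    rw [hrw k] at h2
    exact ⟨uw, h1, h2, h3⟩
  choose uw huwdeg huwid huweq using hdqw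
  -- uw k lies in the span of the u n
  have hdqmem : ∀ k, dq p q (w k) ∈ Submodule.span ℂ (Set.range e) := by
    rw [hspan]; exact fun k => Submodule.subset_span ⟨w k, hq k, rfl⟩
  have hd : ∀ k, ∃ d : Fin N → ℂ, ∑ n, d n • e n = dq p q (w k) :=
    fun k => (Submodule.mem_span_range_iff_exists_fun ℂ).mp (hdqmem k)
  choose d hd using hd
  have huwu : ∀ k, uw k = ∑ n, d k n • u n := by
    intro k
    apply poly_eq
    intro z hz
    have h1 := congrFun (hd k) z
    simp only [Finset.sum_apply, Pi.smul_apply, smul_eq_mul] at h1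
    rw [huweq k z hz] at h1
    have h2 : ∑ n, d k n * e n z = (∑ n, (d k n * (u n).eval z)) / q.eval z := by
      rw [Finset.sum_div]
      refine Finset.sum_congr rfl fun n _ => ?_
      rw [hueq n z hz]; ring
    rw [h2, div_eq_div_iff hz hz] at h1
    have h3 := mul_right_cancel₀ hz h1
    rw [eval_finset_sum]
    simp only [eval_smul, smul_eq_mul]
    exact h3.symm
  -- evaluations of uw
  have huwz : ∀ k j, j ≠ k → (uw k).eval (w j) = 0 := by
    intro k j hjk
    have h1 := congrArg (Polynomial.eval (w j)) (huwid k)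
    simp only [eval_mul, eval_sub, eval_X, eval_C] at h1
    have h2 : eval (w j) p - α * eval (w j) q = 0 := by rw [hroot j]; ring
    rw [h2] at h1
    have : w j - w k ≠ 0 := sub_ne_zero.mpr (fun h => hjk (hw h))
    exact (mul_eq_zero.mp h1).resolve_left this
  have huwkk : ∀ k, (uw k).eval (w k) ≠ 0 := by
    intro k hk
    have : uw k = 0 := by
      apply Polynomial.eq_zero_of_natDegree_lt_card_of_eval_eq_zero (uw k) hw
      · intro j
        rcases eq_or_ne j k with rfl | hjk
        · exact hk
        · exact huwz k j hjk
      · rw [Fintype.card_fin]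
        rcases eq_or_ne (uw k) 0 with h | h
        · simpa [h] using hNpos
        · exact (natDegree_lt_iff_degree_lt h).mpr (huwdeg k)
    have h0 : p - C α * q = 0 := by rw [← huwid k, this, mul_zero]
    exact hpqne h0
  -- uw is linearly independent
  have hliuw : LinearIndependent ℂ uw := by
    rw [Fintype.linearIndependent_iff]
    intro g hg k
    have h1 := congrArg (Polynomial.eval (w k)) hg
    simp only [eval_finset_sum, eval_smul, smul_eq_mul, eval_zero] at h1
    rw [Finset.sum_eq_single k (fun j _ hjk => by rw [huwz j k (Ne.symm hjk), mul_zero])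
      (fun h => absurd (Finset.mem_univ k) h)] at h1
    exact (mul_eq_zero.mp h1).resolve_right (huwkk k)
-- u is linearly independent
  have hspanuw : Submodule.span ℂ (Set.range uw) ≤ Submodule.span ℂ (Set.range u) := by
    rw [Submodule.span_le]
    rintro _ ⟨k, rfl⟩
    rw [huwu k]
    exact Submodule.sum_mem _ fun n _ => Submodule.smul_mem _ _ (Submodule.subset_span ⟨n, rfl⟩)
  have hliu : LinearIndependent ℂ u := by
    have hfin : FiniteDimensional ℂ (Submodule.span ℂ (Set.range u)) :=
      FiniteDimensional.span_of_finite ℂ (Set.finite_range u)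
    rw [linearIndependent_iff_card_eq_finrank_span]
    have h1 : Fintype.card (Fin N) = (Set.range uw).finrank ℂ :=
      linearIndependent_iff_card_eq_finrank_span.mp hliuw
    have h2 : (Set.range uw).finrank ℂ ≤ (Set.range u).finrank ℂ :=
      Submodule.finrank_mono hspanuw
    have h3 : (Set.range u).finrank ℂ ≤ Fintype.card (Fin N) := finrank_range_le_card u
    omega
  -- topology: a neighborhood of α consisting of good values
  have hqopen : IsOpen {z : ℂ | q.eval z ≠ 0} := by
    have : Continuous fun z : ℂ => q.eval z := q.continuous
    exact isOpen_compl_singleton.preimage this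
  have hanr : ∀ m : Fin N, AnalyticAt ℂ (ratEval p q) (w m) := by
    intro m
    have hdiff : DifferentiableOn ℂ (ratEval p q) {z : ℂ | q.eval z ≠ 0} := by
      intro x hx
      exact ((p.differentiableAt.div q.differentiableAt hx).differentiableWithinAt)
    exact hdiff.analyticAt (hqopen.mem_nhds (hq m))
  have hnc : ∀ m : Fin N, ¬ (∀ᶠ z in 𝓝 (w m), ratEval p q z = ratEval p q (w m)) := by
    intro m hev
    have hevq : ∀ᶠ z in 𝓝 (w m), q.eval z ≠ 0 := hqopen.mem_nhds (hq m)
    have hroots : ∀ᶠ z in 𝓝 (w m), (p - C α * q).eval z = 0 := by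
      filter_upwards [hev, hevq] with z h1 h2
      rw [hrw m] at h1
      unfold ratEval at h1
      rw [div_eq_iff h2] at h1
      simp only [eval_sub, eval_mul, eval_C]
      linear_combination h1
    have hfin : {z : ℂ | (p - C α * q).eval z = 0}.Finite := finite_setOf_isRoot hpqne
    exact hfin.not_infinite (infinite_of_mem_nhds (w m) hroots)
  have hmap : ∀ m : Fin N, 𝓝 α ≤ Filter.map (ratEval p q) (𝓝 (w m)) := by
    intro m
    have h := ((hanr m).eventually_constant_or_nhds_le_map_nhds).resolve_left (hnc m)
    rwa [hrw m] at h
  -- radii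
  obtain ⟨δ, hδpos, hδsub⟩ : ∃ δ : Fin N → ℝ, (∀ m, 0 < δ m) ∧
      ∀ m, Metric.ball (w m) (δ m) ⊆ {z : ℂ | q.eval z ≠ 0} := by
    have h := fun m => Metric.isOpen_iff.mp hqopen (w m) (hq m)
    choose δ h1 h2 using h
    exact ⟨δ, h1, h2⟩
  obtain ⟨c, hcpos, hcsep⟩ : ∃ c : ℝ, 0 < c ∧ ∀ m k : Fin N, m ≠ k → c ≤ dist (w m) (w k) := by
    classical
    set s : Finset (Fin N × Fin N) := Finset.univ.filter (fun pr => pr.1 ≠ pr.2) with hs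
    rcases Finset.eq_empty_or_nonempty s with h | h
    · refine ⟨1, one_pos, fun m k hmk => ?_⟩
      exfalso
      have hmem' : (m, k) ∈ s := by simp [hs, hmk]
      rw [h] at hmem'
      exact Finset.notMem_empty _ hmem'
    · refine ⟨s.inf' h (fun pr => dist (w pr.1) (w pr.2)), ?_, fun m k hmk => ?_⟩
      · rw [Finset.lt_inf'_iff]
        rintro ⟨m', k'⟩ hmk'
        have : m' ≠ k' := by simpa [hs] using hmk'
        exact dist_pos.mpr fun hd => this (hw hd)
      · have hmem' : (m, k) ∈ s := by simp [hs, hmk]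
        have h17 := Finset.inf'_le (fun pr : Fin N × Fin N => dist (w pr.1) (w pr.2)) hmem'
        exact le_trans (le_of_eq (by congr)) h17
  set ε : ℝ := min (Finset.univ.inf' ⟨m0, Finset.mem_univ m0⟩ δ) (c / 3) with hεdef
  have hεpos : 0 < ε := lt_min (by exact (Finset.lt_inf'_iff _).mpr fun m _ => hδpos m) (by positivity)
  have hεc : ε ≤ c / 3 := min_le_right _ _
  have hεsub : ∀ m, Metric.ball (w m) ε ⊆ {z : ℂ | q.eval z ≠ 0} := fun m =>
    Set.Subset.trans (Metric.ball_subset_ball (le_trans (min_le_left _ _)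
      (Finset.inf'_le _ (Finset.mem_univ m)))) (hδsub m)
  have hdisj : ∀ m k : Fin N, m ≠ k → ∀ z : ℂ,
      z ∈ Metric.ball (w m) ε → z ∈ Metric.ball (w k) ε → False := by
    intro m k hmk z h1 h2
    rw [Metric.mem_ball] at h1 h2
    have d1 : dist (w m) (w k) ≤ dist z (w m) + dist z (w k) := dist_triangle_left _ _ _
    have := hcsep m k hmk
    linarith
  set A : Set ℂ := Ω ∩ ⋂ m : Fin N, ratEval p q '' Metric.ball (w m) ε with hA
  have hAmem : A ∈ 𝓝 α := by
    refine Filter.inter_mem (hΩ.mem_nhds hα) (Filter.iInter_mem.mpr fun m => ?_)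
    refine hmap m ?_
    rw [Filter.mem_map]
    exact Filter.mem_of_superset (Metric.ball_mem_nhds _ hεpos) (Set.subset_preimage_image _ _)
  -- vanishing on A
  have hkey : ∀ β ∈ A, ∀ n, F n β = 0 := by
    rintro β ⟨hβΩ, hβI⟩ n
    have hz : ∀ m : Fin N, ∃ z, z ∈ Metric.ball (w m) ε ∧ ratEval p q z = β := by
      intro m
      obtain ⟨z, hz1, hz2⟩ := Set.mem_iInter.mp hβI m
      exact ⟨z, hz1, hz2⟩
    choose z hzball hzr using hz
    have hzq : ∀ m, q.eval (z m) ≠ 0 := fun m => hεsub m (hzball m)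
    have hzinj : Function.Injective z := by
      intro m k h
      by_contra hmk
      exact hdisj m k hmk (z m) (hzball m) (h ▸ hzball k)
    have h0 : ∀ m, ∑ j, (u j).eval (z m) * F j β = 0 := by
      intro m
      have h1 := hvan (z m) (hzq m) (by rw [hzr m]; exact hβΩ)
      rw [hzr m] at h1
      have h3 : ∑ j, (u j).eval (z m) * F j β = q.eval (z m) * ∑ j, e j (z m) * F j β := by
        rw [Finset.mul_sum]
        refine Finset.sum_congr rfl fun j _ => ?_
        rw [hueq j (z m) (hzq m)]
        field_simp [hzq m]
        try ring
      rw [h3, h1, mul_zero]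
    set v : Polynomial ℂ := ∑ j, Polynomial.C (F j β) * u j with hv
    have hveval : ∀ m, v.eval (z m) = 0 := by
      intro m
      rw [hv, eval_finset_sum]
      simp only [eval_mul, eval_C]
      rw [← h0 m]
      exact Finset.sum_congr rfl fun j _ => mul_comm _ _
    have hvz : v = 0 := by
      apply Polynomial.eq_zero_of_natDegree_lt_card_of_eval_eq_zero v hzinj hveval
      rw [Fintype.card_fin]
      rcases eq_or_ne v 0 with h | h
      · simpa [h] using hNpos
      · refine (natDegree_lt_iff_degree_lt h).mpr ?_
        rw [hv]
        refine lt_of_le_of_lt (degree_sum_le _ _) ?_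
        rw [Finset.sup_lt_iff (by exact_mod_cast WithBot.bot_lt_coe N)]
        intro j _
        refine lt_of_le_of_lt (degree_mul_le _ _) ?_
        refine lt_of_le_of_lt (add_le_add degree_C_le le_rfl) ?_
        simpa using hudeg j
    have hsum : ∑ j, F j β • u j = 0 := by
      rw [← hvz, hv]
      exact Finset.sum_congr rfl fun j _ => smul_eq_C_mul _
    exact Fintype.linearIndependent_iff.mp hliu (fun j => F j β) hsum n
  -- identity theorem
  intro n x hx
  have hev : F n =ᶠ[𝓝 α] 0 := Filter.eventuallyEq_of_mem hAmem (fun β hβ => hkey β hβ n)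
  exact (hF n).eqOn_zero_of_preconnected_of_eventuallyEq_zero hconn.isPreconnected hα hev hx

end
end

section
/- Let r be a rational function of degree N and α ∈ Ω(r) with distinct preimages w_1, …, w_N. Then every f ∈ 𝔏(r) satisfies the partial fraction identity f(z)/(r(z) − α) = Σ_{n=1}^N f(w_n)/(r′(w_n)(z − w_n)) for z not a pole of r and r(z) ≠ α. -/
open Polynomial

noncomputable section

open Finset

lemma deriv_ratEval (p q : Polynomial ℂ) {a : ℂ} (ha : q.eval a ≠ 0) :
    deriv (ratEval p q) a
      = (p.derivative.eval a * q.eval a - p.eval a * q.derivative.eval a) / (q.eval a)^2 :=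
  ((p.hasDerivAt a).div (q.hasDerivAt a) ha).deriv

lemma dq_mul_q (p q : Polynomial ℂ) {a : ℂ} (ha : q.eval a ≠ 0) :
    ∀ y : ℂ, q.eval y ≠ 0 →
      dq p q a y * q.eval y
        = ((p - C (ratEval p q a) * q) /ₘ (X - C a)).eval y := by
  set A := p - C (ratEval p q a) * q with hA
  have hroot : A.IsRoot a := by
    simp only [IsRoot, hA, eval_sub, eval_mul, eval_C, ratEval]
    field_simp
    simp
  have hfac : (X - C a) * (A /ₘ (X - C a)) = A := mul_divByMonic_eq_iff_isRoot.2 hroot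
  set h := A /ₘ (X - C a) with hh
  intro y hy
  by_cases hya : y = a
  · subst hya
    have hda : A.derivative.eval y = h.eval y := by
      have := congrArg Polynomial.derivative hfac
      rw [derivative_mul, derivative_sub, derivative_X, derivative_C, sub_zero, one_mul] at this
      have := congrArg (Polynomial.eval y) this
      simpa [hroot] using this.symm
    have hA' : A.derivative = p.derivative - C (ratEval p q y) * q.derivative := by
      rw [hA, derivative_sub, derivative_mul, derivative_C, zero_mul, zero_add]
    rw [hA', eval_sub, eval_mul, eval_C] at hda
    rw [dq, if_pos rfl, deriv_ratEval p q hy, ← hda, ratEval]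
    field_simp
  · have hAy : A.eval y = (y - a) * h.eval y := by
      rw [← hfac]; simp
    rw [dq, if_neg hya]
    have hsub : y - a ≠ 0 := sub_ne_zero.2 hya
    have hAy' : p.eval y - (p.eval a / q.eval a) * q.eval y = (y - a) * h.eval y := by
      simpa [hA, ratEval] using hAy
    have hAy'' : p.eval y * q.eval a - p.eval a * q.eval y = (y - a) * h.eval y * q.eval a := by
      have := congrArg (· * q.eval a) hAy'
      field_simp at this
      linear_combination this
    rw [ratEval, ratEval]
    field_simp
    linear_combination hAy''


/-- every `f ∈ 𝔏(r)` satisfies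
`f(z)/(r(z) − α) = Σₙ f(wₙ)/(r′(wₙ)(z − wₙ))` where `w 0, …, w (N-1)` are the
distinct preimages of `α ∈ Ω(r)`. -/
theorem stmt8 (p q : Polynomial ℂ) (hco : IsCoprime p q) (N : ℕ)
    (hN : p.natDegree = N) (hdeg : q.natDegree ≤ p.natDegree)
    (α : ℂ) (w : Fin N → ℂ) (hw : Function.Injective w)
    (hroot : ∀ n, p.eval (w n) = α * q.eval (w n)) (hq : ∀ n, q.eval (w n) ≠ 0)
    (f : ℂ → ℂ) (hf : f ∈ stateSpace p q) :
    ∀ z : ℂ, q.eval z ≠ 0 → ratEval p q z ≠ α →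
      f z / (ratEval p q z - α)
        = ∑ n : Fin N, f (w n) / (deriv (ratEval p q) (w n) * (z - w n)) := by
    induction hf using Submodule.span_induction with
  | zero => intro z hz hne; simp
  | add x y hx hy ihx ihy =>
    intro z hz hne
    simp only [Pi.add_apply]
    rw [add_div, ihx z hz hne, ihy z hz hne, ← Finset.sum_add_distrib]
    exact Finset.sum_congr rfl fun n _ => (add_div _ _ _).symm
  | smul c x hx ih =>
    intro z hz hne
    simp only [Pi.smul_apply, smul_eq_mul]
    rw [mul_div_assoc, ih z hz hne, Finset.mul_sum]
    exact Finset.sum_congr rfl fun n _ => (mul_div_assoc _ _ _).symm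
  | mem g hg =>
    obtain ⟨a, ha, rfl⟩ := hg
    intro z hz hne
    -- the factorization of P = p - α q
    set P : Polynomial ℂ := p - C α * q with hPdef
    have hPw : ∀ n, P.eval (w n) = 0 := by
      intro n; simp [hPdef, hroot n]
    have hPz : P.eval z ≠ 0 := by
      simp only [hPdef, eval_sub, eval_mul, eval_C]
      intro hc
      apply hne
      rw [ratEval, div_eq_iff hz]
      linear_combination hc
    have hdvd : (∏ n : Fin N, (X - C (w n))) ∣ P :=
      Fintype.prod_dvd_of_coprime (pairwise_coprime_X_sub_C hw)
        (fun n => dvd_iff_isRoot.2 (hPw n))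
    obtain ⟨g, hg⟩ := hdvd
    have hprod_ne : (∏ n : Fin N, (X - C (w n))) ≠ 0 :=
      prod_ne_zero_iff.2 fun n _ => X_sub_C_ne_zero (w n)
    have hg0 : g ≠ 0 := by
      rintro rfl; rw [mul_zero] at hg; exact hPz (by rw [hg]; simp)
    have hdegprod : (∏ n : Fin N, (X - C (w n))).natDegree = N := by
      rw [natDegree_prod _ _ fun n _ => X_sub_C_ne_zero (w n)]
      simp
    have hdegP : P.natDegree ≤ N := by
      refine (natDegree_sub_le _ _).trans (max_le (le_of_eq hN) ?_)
      exact (natDegree_C_mul_le _ _).trans (hdeg.trans_eq hN)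
    have hdegg : g.natDegree = 0 := by
      have := natDegree_mul hprod_ne hg0
      rw [← hg, hdegprod] at this
      omega
    obtain ⟨c, rfl⟩ : ∃ c : ℂ, g = C c := ⟨g.coeff 0, eq_C_of_natDegree_eq_zero hdegg⟩
    have hc : c ≠ 0 := by rintro rfl; simp at hg0
    -- evaluations
    have hzw : ∀ n, z - w n ≠ 0 := by
      intro n hcontra
      have hzn : z = w n := by linear_combination hcontra
      apply hne
      rw [hzn, ratEval, hroot n, mul_div_assoc, div_self (hq n), mul_one]
    have hwne : ∀ n, ∀ m ∈ univ.erase n, w n - w m ≠ 0 := by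
      intro n m hm
      rw [sub_ne_zero]
      exact fun e => (mem_erase.1 hm).1 (hw e).symm
    have hevalP : ∀ y : ℂ, P.eval y = (∏ n : Fin N, (y - w n)) * c := by
      intro y; rw [hg]; simp [eval_prod]
    -- derivative of r at w n
    have hderiv : ∀ n, deriv (ratEval p q) (w n)
        = (∏ m ∈ univ.erase n, (w n - w m)) * c / q.eval (w n) := by
      intro n
      have hP' : P.derivative.eval (w n) = (∏ m ∈ univ.erase n, (w n - w m)) * c := by
        rw [hg, derivative_mul, derivative_C, mul_zero, add_zero,
          ← Finset.mul_prod_erase univ _ (Finset.mem_univ n), derivative_mul]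
        simp [eval_prod]
      have hP'2 : P.derivative.eval (w n) = p.derivative.eval (w n) - α * q.derivative.eval (w n) := by
        have : P.derivative = p.derivative - C α * q.derivative := by
          rw [hPdef, derivative_sub, derivative_mul, derivative_C, zero_mul, zero_add]
        rw [this, eval_sub, eval_mul, eval_C]
      rw [deriv_ratEval p q (hq n), ← hP', hP'2, hroot n]
      rw [div_eq_div_iff (pow_ne_zero 2 (hq n)) (hq n)]
      ring
    -- the polynomial h with dq * q = h
    set A : Polynomial ℂ := p - C (ratEval p q a) * q with hAdef
    set h : Polynomial ℂ := A /ₘ (X - C a) with hhdef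
    have hfq : ∀ y : ℂ, q.eval y ≠ 0 → dq p q a y = h.eval y / q.eval y := by
      intro y hy
      rw [eq_div_iff hy]
      exact dq_mul_q p q ha y hy
    have hdegh : h.degree < (N : WithBot ℕ) := by
      rcases eq_or_ne A 0 with hA0 | hA0
      · rw [hhdef, hA0, zero_divByMonic, degree_zero]
        exact WithBot.bot_lt_coe _
      · have h1 : h.degree < A.degree :=
          degree_divByMonic_lt A (X - C a) hA0 (by rw [degree_X_sub_C]; norm_num)
        refine h1.trans_le ?_
        refine (degree_sub_le _ _).trans (max_le ?_ ?_)
        · exact degree_le_natDegree.trans (by exact_mod_cast hN.le)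
        · exact degree_le_natDegree.trans
            (by exact_mod_cast (natDegree_C_mul_le _ q).trans (hdeg.trans_eq hN))
    -- Lagrange interpolation
    have hvs : Set.InjOn w ↑(univ : Finset (Fin N)) := fun x _ y _ e => hw e
    have hinterp := Lagrange.eq_interpolate hvs
      (f := h) (by rwa [Finset.card_univ, Fintype.card_fin])
    have hhz : h.eval z = ∑ n : Fin N,
        h.eval (w n) * ∏ m ∈ univ.erase n, ((w n - w m)⁻¹ * (z - w m)) := by
      conv_lhs => rw [hinterp]
      simp [Lagrange.interpolate_apply, Lagrange.basis, Lagrange.basisDivisor,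
        eval_finset_sum, eval_prod]
    -- assemble
    have hrα : ratEval p q z - α = (∏ n : Fin N, (z - w n)) * c / q.eval z := by
      rw [← hevalP]
      simp only [hPdef, eval_sub, eval_mul, eval_C, ratEval]
      field_simp
    rw [hfq z hz, hrα]
    have hprodz : (∏ n : Fin N, (z - w n)) ≠ 0 := prod_ne_zero_iff.2 fun n _ => hzw n
    have hprodc : (∏ n : Fin N, (z - w n)) * c ≠ 0 := mul_ne_zero hprodz hc
    have hLHS : h.eval z / q.eval z / ((∏ n : Fin N, (z - w n)) * c / q.eval z)
        = h.eval z / ((∏ n : Fin N, (z - w n)) * c) := by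
      rw [div_div_div_eq, mul_comm (eval z h) (eval z q), mul_div_assoc,
        mul_div_assoc', mul_div_mul_left _ _ hz]
    rw [hLHS]
    rw [hhz, Finset.sum_div]
    refine Finset.sum_congr rfl fun n _ => ?_
    rw [hfq (w n) (hq n), hderiv n]
    have hprodn : (∏ m ∈ univ.erase n, (w n - w m)) ≠ 0 :=
      prod_ne_zero_iff.2 (hwne n)
    have hprodzn : (∏ m ∈ univ.erase n, (z - w m)) ≠ 0 :=
      prod_ne_zero_iff.2 fun m _ => hzw m
    have hsplit : (∏ m ∈ univ.erase n, ((w n - w m)⁻¹ * (z - w m)))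
        = (∏ m ∈ univ.erase n, (w n - w m))⁻¹ * ∏ m ∈ univ.erase n, (z - w m) := by
      rw [Finset.prod_mul_distrib, ← Finset.prod_inv_distrib]
    have hfull : (∏ m : Fin N, (z - w m))
        = (z - w n) * ∏ m ∈ univ.erase n, (z - w m) :=
      (Finset.mul_prod_erase univ _ (Finset.mem_univ n)).symm
    rw [hsplit, hfull]
    set D := ∏ m ∈ univ.erase n, (w n - w m) with hD
    set E := ∏ m ∈ univ.erase n, (z - w m) with hE
    have hu : z - w n ≠ 0 := hzw n
    have hQ : q.eval (w n) ≠ 0 := hq n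
    clear_value D E
    field_simp


end
end

section
/- Let r(z) = z + 1/z, let α ∈ ℂ \ {2, −2, 0}, and let α₊, α₋ be the two roots of z + 1/z = α. With Z_r(z) = (1, 1/z), the 2×2 matrix X = Z_r(α₊)ᵗ Z_r(α₊)/r′(α₊) + Z_r(α₋)ᵗ Z_r(α₋)/r′(α₋) equals diag(1, −1), independently of α. -/
/-- for `r(z) = z + 1/z` (with `r′(z) = 1 − 1/z²`,
`Z_r(z) = (1, 1/z)`) and `α ∉ {2, −2, 0}` with roots `a, b` of `z + 1/z = α`,
the matrix `X = Z_r(a)ᵗ Z_r(a)/r′(a) + Z_r(b)ᵗ Z_r(b)/r′(b)` equals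
`diag(1, −1)`, independently of `α`. -/
theorem stmt11 (α a b : ℂ) (hα2 : α ≠ 2) (hα2' : α ≠ -2) (hα0 : α ≠ 0)
    (ha0 : a ≠ 0) (hb0 : b ≠ 0) (hab : a ≠ b)
    (ha : a + a⁻¹ = α) (hb : b + b⁻¹ = α) :
    (Matrix.of fun i j : Fin 2 =>
        ![1, a⁻¹] i * ![1, a⁻¹] j / (1 - (a⁻¹) ^ 2)
          + ![1, b⁻¹] i * ![1, b⁻¹] j / (1 - (b⁻¹) ^ 2))
      = !![(1 : ℂ), 0; 0, -1] := by
  have hab1 : a * b = 1 := by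
    have h : a + a⁻¹ = b + b⁻¹ := by rw [ha, hb]
    have h2 : a * (a * b) + b = b * (a * b) + a := by
      field_simp at h
      linear_combination h
    have h3 : (a - b) * (a * b - 1) = 0 := by linear_combination h2
    rcases mul_eq_zero.mp h3 with h4 | h4
    · exact absurd (sub_eq_zero.mp h4) hab
    · exact sub_eq_zero.mp h4
  have ha1 : a ≠ 1 := by rintro rfl; apply hα2; rw [← ha]; norm_num
  have ha1' : a ≠ -1 := by rintro rfl; apply hα2'; rw [← ha]; norm_num
  have ha2 : a ^ 2 ≠ 1 := by
    intro h
    have : (a - 1) * (a + 1) = 0 := by linear_combination h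
    rcases mul_eq_zero.mp this with h' | h'
    · exact ha1 (sub_eq_zero.mp h')
    · exact ha1' (eq_neg_of_add_eq_zero_left h')
  have hb' : b = a⁻¹ := by
    field_simp
    linear_combination hab1
  have hda : 1 - (a⁻¹) ^ 2 ≠ 0 := by
    intro h
    apply ha2
    have h' := (sub_eq_zero.mp h).symm
    rw [inv_pow] at h'
    exact inv_eq_one.mp h'
  have hdb : 1 - (b⁻¹) ^ 2 ≠ 0 := by
    rw [hb', inv_inv]
    intro h
    exact ha2 (sub_eq_zero.mp h).symm
  subst hb'
  have h2 : (1:ℂ) - a ^ 2 ≠ 0 := fun h => ha2 (by linear_combination -h)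
  have h2' : (-1:ℂ) + a ^ 2 ≠ 0 := fun h => ha2 (by linear_combination h)
  have h3 : -a + a ^ 3 ≠ 0 := fun h => (mul_ne_zero ha0 h2') (by linear_combination h)
  have h5 : a ^ 2 - 1 ≠ 0 := fun h => ha2 (by linear_combination h)
  have h6 : a ^ 3 - a ≠ 0 := fun h => (mul_ne_zero ha0 h5) (by linear_combination h)
  have h7 : a ^ 4 - a ^ 2 ≠ 0 := fun h => (mul_ne_zero (pow_ne_zero 2 ha0) h5) (by linear_combination h)
  have h4 : -a ^ 2 + a ^ 4 ≠ 0 := fun h => (mul_ne_zero (pow_ne_zero 2 ha0) h2') (by linear_combination h)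
  ext i j
  fin_cases i <;> fin_cases j <;>
    simp only [Matrix.of_apply, Fin.zero_eta, Fin.mk_one, Fin.isValue, Matrix.cons_val', Matrix.cons_val_zero,
      Matrix.cons_val_one, Matrix.head_cons, Matrix.empty_val',
      Matrix.cons_val_fin_one, Matrix.head_fin_const, inv_inv] <;>
    field_simp [h2, h2', h3, h4, h5, h6, h7] <;> ring
end

section
/- Let r be a rational function of degree N, α ∈ Ω(r), C ∈ ℂ^{mN×M}, and A, B ∈ ℂ^{M×M} with det(A − α B) ≠ 0. Then the matrix-valued function M(z) = (Z_r(z) ⊗ I_m) C (A − r(z)B)^{−1} satisfies (R^{(r)}_α M)(z) = M(z) B (A − α B)^{−1}; in particular the column span of M is R^{(r)}_α-invariant. -/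
open Polynomial

noncomputable section

/-- The Kronecker row `Z_r(z) ⊗ I_m`, an `m × (N·m)` matrix. -/
def ZrKron {N m : ℕ} (e : Fin N → (ℂ → ℂ)) (z : ℂ) :
    Matrix (Fin m) (Fin N × Fin m) ℂ :=
  Matrix.of fun i nk => if nk.2 = i then e nk.1 z else 0

/-! ### Auxiliary lemmas -/

lemma nodal_deriv_ne {N : ℕ} (w : Fin N → ℂ) (hw : Function.Injective w) (n : Fin N) :
    Polynomial.eval (w n) (derivative (Lagrange.nodal Finset.univ w)) ≠ 0 := by
  have h1 := Lagrange.nodalWeight_ne_zero (s := Finset.univ) (v := w) (hw.injOn) (Finset.mem_univ n)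
  rw [Lagrange.nodalWeight_eq_eval_derivative_nodal (Finset.mem_univ n)] at h1
  exact fun h => h1 (by simp [h])

/-- Partial-fraction expansion over the nodal polynomial. -/
lemma pf_nodal {N : ℕ} (w : Fin N → ℂ) (hw : Function.Injective w)
    (g : ℂ[X]) (hg : g.degree < N) (z : ℂ) (hz : ∀ n, z ≠ w n) :
    g.eval z / (Lagrange.nodal Finset.univ w).eval z
      = ∑ n : Fin N, g.eval (w n) /
          ((derivative (Lagrange.nodal Finset.univ w)).eval (w n) * (z - w n)) := by
  have hvs : Set.InjOn w (Finset.univ : Finset (Fin N)) := hw.injOn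
  have hcard : g.degree < ((Finset.univ : Finset (Fin N)).card : ℕ) := by simpa using hg
  have hrep := Lagrange.eq_interpolate (f := g) hvs hcard
  have hx : ∀ n ∈ (Finset.univ : Finset (Fin N)), z ≠ w n := fun n _ => hz n
  have heval := Lagrange.eval_interpolate_not_at_node (fun n => g.eval (w n)) hx
  rw [← hrep] at heval
  have hTz : (Lagrange.nodal Finset.univ w).eval z ≠ 0 :=
    Lagrange.eval_nodal_not_at_node hx
  rw [heval, mul_comm, mul_div_assoc, div_self hTz, mul_one]
  refine Finset.sum_congr rfl fun n _ => ?_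
  rw [Lagrange.nodalWeight_eq_eval_derivative_nodal (Finset.mem_univ n)]
  rw [div_eq_mul_inv, mul_inv, ← mul_assoc]
  ring

/-- The polynomial `p − αq` factors as a nonzero constant times the nodal polynomial. -/
lemma sP_fact (p q : Polynomial ℂ) (hco : IsCoprime p q) (N : ℕ) (hNpos : 0 < N)
    (hN : p.natDegree = N) (hdeg : q.natDegree ≤ p.natDegree)
    (α : ℂ) (w : Fin N → ℂ) (hw : Function.Injective w)
    (hroot : ∀ n, p.eval (w n) = α * q.eval (w n)) :
    ∃ c : ℂ, c ≠ 0 ∧ p - C α * q = C c * Lagrange.nodal Finset.univ w := by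
  set T := Lagrange.nodal (Finset.univ : Finset (Fin N)) w with hT
  set sP := p - C α * q with hsP
  have hTdeg : T.natDegree = N := by
    rw [hT, Lagrange.natDegree_nodal, Finset.card_univ, Fintype.card_fin]
  have hTmonic : T.Monic := Lagrange.nodal_monic
  set c := sP.coeff N with hc
  have hcoeff : ∀ m : ℕ, N ≤ m → (sP - C c * T).coeff m = 0 := by
    intro m hm
    rcases eq_or_lt_of_le hm with h | h
    · have hTN : T.coeff N = 1 := by
        have := hTmonic.coeff_natDegree
        rwa [hTdeg] at this
      simp [← h, coeff_C_mul, hTN, hc]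
    · have h1 : sP.coeff m = 0 := by
        apply coeff_eq_zero_of_natDegree_lt
        calc sP.natDegree ≤ max p.natDegree (C α * q).natDegree := natDegree_sub_le _ _
        _ ≤ N := by
            apply max_le (le_of_eq hN)
            calc (C α * q).natDegree ≤ q.natDegree := natDegree_C_mul_le _ _
            _ ≤ N := hN ▸ hdeg
        _ < m := h
      have h2 : (C c * T).coeff m = 0 := by
        apply coeff_eq_zero_of_natDegree_lt
        calc (C c * T).natDegree ≤ T.natDegree := natDegree_C_mul_le _ _
        _ < m := hTdeg ▸ h
      simp [coeff_sub, h1, h2]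
  have hdlt : (sP - C c * T).degree < ((Finset.univ : Finset (Fin N)).card : ℕ) := by
    rw [Finset.card_univ, Fintype.card_fin]
    exact degree_lt_iff_coeff_zero _ _ |>.mpr (fun m hm => hcoeff m (by exact_mod_cast hm))
  have hval : ∀ n ∈ (Finset.univ : Finset (Fin N)), (sP - C c * T).eval (w n) = 0 := by
    intro n _
    have h1 : sP.eval (w n) = 0 := by simp [hsP, hroot n]
    have h2 : T.eval (w n) = 0 := Lagrange.eval_nodal_at_node (Finset.mem_univ n)
    simp [h1, h2]
  have hzero : sP - C c * T = 0 :=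
    eq_zero_of_degree_lt_of_eval_index_eq_zero Finset.univ hw.injOn hdlt hval
  have hfac : sP = C c * T := sub_eq_zero.mp hzero
  refine ⟨c, ?_, hfac⟩
  intro hc0
  have hsP0 : sP = 0 := by rw [hfac, hc0]; simp
  have hpq : p = C α * q := by
    have := sub_eq_zero.mp hsP0; linear_combination this
  have hqdvd : q ∣ p := ⟨C α, by rw [hpq]; ring⟩
  have hqunit : IsUnit q := hco.isUnit_of_dvd' hqdvd dvd_rfl
  have hqdeg : q.natDegree = 0 := natDegree_eq_zero_of_isUnit hqunit
  have hpdeg : p.natDegree = 0 := by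
    rw [hpq]
    exact le_antisymm (le_trans (natDegree_C_mul_le _ _) (le_of_eq hqdeg)) (Nat.zero_le _)
  omega

lemma derivRat (p q : Polynomial ℂ) (a : ℂ) (ha : q.eval a ≠ 0) :
    deriv (ratEval p q) a =
      ((derivative p).eval a * q.eval a - p.eval a * (derivative q).eval a) / (q.eval a)^2 :=
  ((p.hasDerivAt a).div (q.hasDerivAt a) ha).deriv

lemma dq_eval (p q : Polynomial ℂ) (a : ℂ) (ha : q.eval a ≠ 0) (x : ℂ) (hx : q.eval x ≠ 0) :
    dq p q a x =
      ((p * C (q.eval a) - C (p.eval a) * q) /ₘ (X - C a)).eval x / (q.eval x * q.eval a) := by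
  set num := p * C (q.eval a) - C (p.eval a) * q with hnum
  set g := num /ₘ (X - C a) with hg
  have hroot : num.IsRoot a := by simp [hnum, IsRoot, mul_comm]
  have hfac : (X - C a) * g = num := mul_divByMonic_eq_iff_isRoot.mpr hroot
  by_cases hxa : x = a
  · subst hxa
    have hga : g.eval x = (derivative p).eval x * q.eval x - p.eval x * (derivative q).eval x := by
      have hd := congrArg derivative hfac
      have := congrArg (eval x) hd
      simp [derivative_mul, hnum] at this
      linear_combination this
    rw [dq, if_pos rfl, derivRat p q x ha, hga, sq]
  · have hev : (x - a) * g.eval x = p.eval x * q.eval a - p.eval a * q.eval x := by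
      have := congrArg (eval x) hfac
      simpa [hnum] using this
    rw [dq, if_neg hxa, ratEval, ratEval]
    have hxa' : x - a ≠ 0 := sub_ne_zero.mpr hxa
    field_simp
    linear_combination (-1 : ℂ) * hev

lemma dq_deg (p q : Polynomial ℂ) (N : ℕ) (hN : p.natDegree = N)
    (hdeg : q.natDegree ≤ p.natDegree) (a : ℂ) :
    ((p * C (q.eval a) - C (p.eval a) * q) /ₘ (X - C a)).degree < (N : WithBot ℕ) := by
  set num := p * C (q.eval a) - C (p.eval a) * q with hnum
  have hnd : num.degree ≤ (N : WithBot ℕ) := by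
    apply le_trans (degree_sub_le _ _)
    apply max_le
    · refine le_trans (degree_mul_le _ _) ?_
      refine le_trans (add_le_add degree_le_natDegree degree_C_le) ?_
      simp [hN]
    · refine le_trans (degree_mul_le _ _) ?_
      refine le_trans (add_le_add degree_C_le degree_le_natDegree) ?_
      simp
      exact_mod_cast hN ▸ hdeg
  by_cases h0 : num = 0
  · rw [h0, zero_divByMonic]
    exact lt_of_le_of_lt (by simp) (WithBot.bot_lt_coe N)
  · exact lt_of_lt_of_le (degree_divByMonic_lt num (X - C a) h0
      (by rw [degree_X_sub_C]; exact zero_lt_one)) hnd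

/-- The fundamental identity: for `f ∈ 𝔏(r)`,
`f(z)/(r(z)−α) = ∑ₙ f(wₙ)/(r′(wₙ)(z−wₙ))`. -/
lemma keyA_s15 (p q : Polynomial ℂ) (hco : IsCoprime p q) (N : ℕ) (hNpos : 0 < N)
    (hN : p.natDegree = N) (hdeg : q.natDegree ≤ p.natDegree)
    (α : ℂ) (w : Fin N → ℂ) (hw : Function.Injective w)
    (hroot : ∀ n, p.eval (w n) = α * q.eval (w n)) (hq : ∀ n, q.eval (w n) ≠ 0)
    (z : ℂ) (hz : q.eval z ≠ 0) (hrz : ratEval p q z ≠ α)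
    (f : ℂ → ℂ) (hf : f ∈ stateSpace p q) :
    f z / (ratEval p q z - α)
      = ∑ n : Fin N, f (w n) / (deriv (ratEval p q) (w n) * (z - w n)) := by
  obtain ⟨c, hc, hfac⟩ := sP_fact p q hco N hNpos hN hdeg α w hw hroot
  set T := Lagrange.nodal (Finset.univ : Finset (Fin N)) w with hT
  set sP := p - C α * q with hsP
  have hrw : ∀ n, ratEval p q (w n) = α := by
    intro n
    rw [ratEval, hroot n, mul_div_assoc, div_self (hq n), mul_one]
  have hzw : ∀ n, z ≠ w n := fun n h => hrz (by rw [h, hrw n])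
  have hzw' : ∀ n, z - w n ≠ 0 := fun n => sub_ne_zero.mpr (hzw n)
  have hsPz : sP.eval z ≠ 0 := by
    intro h
    apply hrz
    have h1 : p.eval z = α * q.eval z := by
      have h2 : p.eval z - α * q.eval z = 0 := by simpa [hsP] using h
      linear_combination h2
    rw [ratEval, h1, mul_div_assoc, div_self hz, mul_one]
  have hrz' : ratEval p q z - α ≠ 0 := sub_ne_zero.mpr hrz
  have hsPd : ∀ n, (derivative sP).eval (w n) = c * (derivative T).eval (w n) := by
    intro n; rw [hfac]; simp
  have hsPdne : ∀ n, (derivative sP).eval (w n) ≠ 0 := by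
    intro n; rw [hsPd n]
    exact mul_ne_zero hc (nodal_deriv_ne w hw n)
  have hD : ∀ n, deriv (ratEval p q) (w n) = (derivative sP).eval (w n) / q.eval (w n) := by
    intro n
    rw [derivRat p q (w n) (hq n)]
    have hd : (derivative sP).eval (w n)
        = (derivative p).eval (w n) - α * (derivative q).eval (w n) := by simp [hsP]
    rw [hd]
    have hqn := hq n
    field_simp
    linear_combination (-(derivative q).eval (w n)) * hroot n
  have hDne : ∀ n, deriv (ratEval p q) (w n) ≠ 0 := by
    intro n; rw [hD n]
    exact div_ne_zero (hsPdne n) (hq n)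
  -- partial fractions over sP
  have pf_sP : ∀ g : ℂ[X], g.degree < (N : WithBot ℕ) →
      g.eval z / sP.eval z
        = ∑ n : Fin N, g.eval (w n) / ((derivative sP).eval (w n) * (z - w n)) := by
    intro g hg
    have h1 := pf_nodal w hw g hg z hzw
    have hsPez : sP.eval z = c * T.eval z := by rw [hfac]; simp
    have hTz : T.eval z ≠ 0 := Lagrange.eval_nodal_not_at_node (fun n _ => hzw n)
    rw [hsPez]
    calc g.eval z / (c * T.eval z) = (1/c) * (g.eval z / T.eval z) := by
          field_simp
      _ = (1/c) * ∑ n : Fin N, g.eval (w n) /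
            ((derivative T).eval (w n) * (z - w n)) := by rw [h1]
      _ = ∑ n : Fin N, g.eval (w n) / ((derivative sP).eval (w n) * (z - w n)) := by
          rw [Finset.mul_sum]
          refine Finset.sum_congr rfl fun n _ => ?_
          rw [hsPd n, one_div, inv_mul_eq_div, div_div]
          congr 1
          ring
  -- the property is linear in f; prove it for generators via span induction
  refine Submodule.span_induction (p := fun f _ => f z / (ratEval p q z - α)
    = ∑ n : Fin N, f (w n) / (deriv (ratEval p q) (w n) * (z - w n))) ?_ ?_ ?_ ?_ hf
  · rintro f ⟨a, ha, rfl⟩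
    set g := (p * C (q.eval a) - C (p.eval a) * q) /ₘ (X - C a) with hg
    have hgz := dq_eval p q a ha z hz
    have hgw : ∀ n, dq p q a (w n) = g.eval (w n) / (q.eval (w n) * q.eval a) :=
      fun n => dq_eval p q a ha (w n) (hq n)
    have hpf := pf_sP g (dq_deg p q N hN hdeg a)
    have hrzα : ratEval p q z - α = sP.eval z / q.eval z := by
      rw [ratEval]
      simp only [hsP, eval_sub, eval_mul, eval_C]
      field_simp
    calc dq p q a z / (ratEval p q z - α)
        = (1/q.eval a) * (g.eval z / sP.eval z) := by
          rw [hgz, hrzα]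
          field_simp
          ring
      _ = (1/q.eval a) * ∑ n : Fin N, g.eval (w n) /
            ((derivative sP).eval (w n) * (z - w n)) := by rw [hpf]
      _ = ∑ n : Fin N, dq p q a (w n) / (deriv (ratEval p q) (w n) * (z - w n)) := by
          rw [Finset.mul_sum]
          refine Finset.sum_congr rfl fun n _ => ?_
          rw [hgw n, hD n]
          have h1 := hq n
          have h2 := hsPdne n
          have h3 := hzw' n
          have h4 := ha
          field_simp
  · simp
  · intro x y hx hy ihx ihy
    simp only [Pi.add_apply, add_div]
    rw [ihx, ihy, ← Finset.sum_add_distrib]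
  · intro a x hx ih
    simp only [Pi.smul_apply, smul_eq_mul, mul_div_assoc]
    rw [ih, Finset.mul_sum]

/-- Entry formula for products with the Kronecker row. -/
lemma ZrKron_mul_apply {N m M' : ℕ} (e : Fin N → (ℂ → ℂ)) (ζ : ℂ)
    (D : Matrix (Fin N × Fin m) (Fin M') ℂ) (i : Fin m) (k : Fin M') :
    (ZrKron (m := m) e ζ * D) i k = ∑ n : Fin N, e n ζ * D (n, i) k := by
  rw [Matrix.mul_apply, Fintype.sum_prod_type]
  refine Finset.sum_congr rfl fun n _ => ?_
  simp [ZrKron, ite_mul]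

/-- The matrix resolvent identity. -/
lemma resolventId {K : ℕ} (A B : Matrix (Fin K) (Fin K) ℂ) (α β : ℂ)
    (hY : (A - α • B).det ≠ 0) (hX : (A - β • B).det ≠ 0) :
    (A - β • B)⁻¹ = (β - α) • ((A - β • B)⁻¹ * B * (A - α • B)⁻¹) + (A - α • B)⁻¹ := by
  have h1 : (A - β•B) * (A - β•B)⁻¹ = 1 := Matrix.mul_nonsing_inv _ (isUnit_iff_ne_zero.mpr hX)
  have h2 : (A - α•B) * (A - α•B)⁻¹ = 1 := Matrix.mul_nonsing_inv _ (isUnit_iff_ne_zero.mpr hY)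
  apply Matrix.inv_eq_right_inv
  have hXY : A - β•B = (A - α•B) - (β - α)•B := by rw [sub_smul]; abel
  rw [mul_add, mul_smul_comm, ← mul_assoc, ← mul_assoc, h1, one_mul]
  rw [hXY, sub_mul, h2, smul_mul_assoc]
  abel

/-- `M(z) = (Z_r(z) ⊗ I_m) C (A − r(z)B)⁻¹` satisfies
`(R^{(r)}_α M)(z) = M(z) B (A − αB)⁻¹` entrywise; in particular the column
span of `M` is `R^{(r)}_α`-invariant. -/
theorem stmt15 (p q : Polynomial ℂ) (hco : IsCoprime p q) (N : ℕ)
    (hN : p.natDegree = N) (hdeg : q.natDegree ≤ p.natDegree)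
    (e : Fin N → (ℂ → ℂ)) (hmem : ∀ n, e n ∈ stateSpace p q)
    (hli : LinearIndependent ℂ e)
    (hspan : Submodule.span ℂ (Set.range e) = stateSpace p q)
    (α : ℂ) (w : Fin N → ℂ) (hw : Function.Injective w)
    (hroot : ∀ n, p.eval (w n) = α * q.eval (w n)) (hq : ∀ n, q.eval (w n) ≠ 0)
    (m M : ℕ) (C : Matrix (Fin N × Fin m) (Fin M) ℂ)
    (A B : Matrix (Fin M) (Fin M) ℂ) (hAB : (A - α • B).det ≠ 0) :
    ∀ z : ℂ, q.eval z ≠ 0 → ratEval p q z ≠ α →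
      (A - ratEval p q z • B).det ≠ 0 →
      ∀ (i : Fin m) (k : Fin M),
        Rop p q α w
          (fun ζ => (ZrKron (m := m) e ζ * C * (A - ratEval p q ζ • B)⁻¹) i k) z
        = (ZrKron (m := m) e z * C * (A - ratEval p q z • B)⁻¹ * B * (A - α • B)⁻¹) i k := by
  intro z hz hrz hXdet i k
  have hrz' : ratEval p q z - α ≠ 0 := sub_ne_zero.mpr hrz
  have hrw : ∀ n, ratEval p q (w n) = α := by
    intro n
    rw [ratEval, hroot n, mul_div_assoc, div_self (hq n), mul_one]
  set rz := ratEval p q z with hrzdef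
  set Y := A - α • B with hY
  set X := A - rz • B with hX
  set G : Fin N → ℂ := fun ν => (C * Y⁻¹) (ν, i) k with hG
  set H : Fin N → ℂ := fun ν => (C * X⁻¹ * B * Y⁻¹) (ν, i) k with hH
  set D : Fin N → ℂ := fun n => deriv (ratEval p q) (w n) with hDdef
  set F : ℂ → ℂ := fun ζ => (ZrKron (m := m) e ζ * C * (A - ratEval p q ζ • B)⁻¹) i k with hF
  -- value at z via the resolvent identity
  have hres0 : X⁻¹ = (rz - α) • (X⁻¹ * B * Y⁻¹) + Y⁻¹ := resolventId A B α rz hAB hXdet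
  have hres : C * X⁻¹ = (rz - α) • (C * X⁻¹ * B * Y⁻¹) + C * Y⁻¹ := by
    calc C * X⁻¹ = C * ((rz - α) • (X⁻¹ * B * Y⁻¹) + Y⁻¹) := by conv_lhs => rw [hres0]
      _ = (rz - α) • (C * X⁻¹ * B * Y⁻¹) + C * Y⁻¹ := by
          simp only [Matrix.mul_add, Matrix.mul_smul, Matrix.mul_assoc]
  have hFz : F z = ∑ ν : Fin N, e ν z * ((rz - α) * H ν + G ν) := by
    show (ZrKron (m := m) e z * C * X⁻¹) i k = _
    rw [Matrix.mul_assoc, ZrKron_mul_apply]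
    refine Finset.sum_congr rfl fun ν _ => ?_
    congr 1
    rw [hres]
    simp [hG, hH]
  -- value at the nodes
  have hFw : ∀ n, F (w n) = ∑ ν : Fin N, e ν (w n) * G ν := by
    intro n
    show (ZrKron (m := m) e (w n) * C * (A - ratEval p q (w n) • B)⁻¹) i k = _
    rw [hrw n, ← hY, Matrix.mul_assoc, ZrKron_mul_apply]
  -- the key identity for each basis function
  have key : ∀ ν : Fin N, e ν z / (rz - α)
      = ∑ n : Fin N, e ν (w n) / (D n * (z - w n)) :=
    fun ν => keyA_s15 p q hco N ν.pos hN hdeg α w hw hroot hq z hz hrz (e ν) (hmem ν)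
  -- right-hand side
  have hRHS : (ZrKron (m := m) e z * C * X⁻¹ * B * Y⁻¹) i k = ∑ ν : Fin N, e ν z * H ν := by
    rw [show ZrKron (m := m) e z * C * X⁻¹ * B * Y⁻¹
        = ZrKron (m := m) e z * (C * X⁻¹ * B * Y⁻¹) by
      simp only [Matrix.mul_assoc]]
    rw [ZrKron_mul_apply]
  rw [show (ZrKron (m := m) e z * C * (A - ratEval p q z • B)⁻¹ * B * (A - α • B)⁻¹) i k
      = (ZrKron (m := m) e z * C * X⁻¹ * B * Y⁻¹) i k by rw [← hX, ← hY], hRHS]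
  -- expand Rop and compute
  rw [Rop]
  rw [show ratEval p q z = rz from rfl]
  rw [hFz]
  have hsum : ∑ n : Fin N, F (w n) / (deriv (ratEval p q) (w n) * (z - w n))
      = ∑ ν : Fin N, G ν * (e ν z / (rz - α)) := by
    calc ∑ n : Fin N, F (w n) / (deriv (ratEval p q) (w n) * (z - w n))
        = ∑ n : Fin N, ∑ ν : Fin N, G ν * (e ν (w n) / (D n * (z - w n))) := by
          refine Finset.sum_congr rfl fun n _ => ?_
          rw [hFw n, Finset.sum_div]
          refine Finset.sum_congr rfl fun ν _ => ?_
          simp only [hDdef]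
          ring
      _ = ∑ ν : Fin N, ∑ n : Fin N, G ν * (e ν (w n) / (D n * (z - w n))) :=
          Finset.sum_comm
      _ = ∑ ν : Fin N, G ν * (e ν z / (rz - α)) := by
          refine Finset.sum_congr rfl fun ν _ => ?_
          rw [← Finset.mul_sum, ← key ν]
  rw [hsum]
  rw [Finset.sum_div, ← Finset.sum_sub_distrib]
  refine Finset.sum_congr rfl fun ν _ => ?_
  field_simp
  ring

end
end

section
/- Let f be a function analytic on a domain Ω ⊆ ℂ \ {0} that is symmetric under z ↦ 1/z, and suppose f(z) = f(1/z) for all z ∈ Ω. If f admits a representation f(z) = F_1(z + 1/z) + (1/z) F_2(z + 1/z) with F_1, F_2 analytic, then F_2 ≡ 0, i.e. f(z) = F(z + 1/z) for a single analytic function F. -/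
open Topology Filter


/-- if `f` is analytic on a domain `Ω ⊆ ℂ \ {0}` symmetric under
`z ↦ 1/z`, satisfies `f(z) = f(1/z)`, and admits a representation
`f(z) = F₁(z + 1/z) + (1/z) F₂(z + 1/z)` with `F₁, F₂` analytic, then `F₂ ≡ 0`
(on the image of `Ω` under `z + 1/z`) and `f(z) = F₁(z + 1/z)`. -/
theorem stmt17 (Ω : Set ℂ) (hΩopen : IsOpen Ω) (hΩconn : IsConnected Ω)
    (hΩ0 : (0 : ℂ) ∉ Ω) (hΩsym : ∀ z ∈ Ω, z⁻¹ ∈ Ω)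
    (f : ℂ → ℂ) (hf : AnalyticOnNhd ℂ f Ω)
    (hsym : ∀ z ∈ Ω, f z = f z⁻¹)
    (U : Set ℂ) (hU : IsOpen U) (hUim : ∀ z ∈ Ω, z + z⁻¹ ∈ U)
    (F₁ F₂ : ℂ → ℂ) (hF₁ : AnalyticOnNhd ℂ F₁ U) (hF₂ : AnalyticOnNhd ℂ F₂ U)
    (hrep : ∀ z ∈ Ω, f z = F₁ (z + z⁻¹) + z⁻¹ * F₂ (z + z⁻¹)) :
    ∀ z ∈ Ω, F₂ (z + z⁻¹) = 0 ∧ f z = F₁ (z + z⁻¹) := by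
  have hz0 : ∀ z ∈ Ω, z ≠ 0 := fun z hz h => hΩ0 (h ▸ hz)
  have key : ∀ z ∈ Ω, z ≠ 1 → z ≠ -1 → F₂ (z + z⁻¹) = 0 := by
    intro z hz h1 h2
    have hzne := hz0 z hz
    have hinv : z⁻¹ ∈ Ω := hΩsym z hz
    have e1 := hrep z hz
    have e2 := hrep z⁻¹ hinv
    rw [inv_inv, add_comm (z⁻¹) z] at e2
    have hs := hsym z hz
    rw [e1, e2] at hs
    have hmul : (z⁻¹ - z) * F₂ (z + z⁻¹) = 0 := by linear_combination hs
    have hne : z⁻¹ - z ≠ 0 := by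
      intro h
      have hzz : z * z = 1 := by
        have hiz : z⁻¹ = z := sub_eq_zero.mp h
        field_simp at hiz
        linear_combination -hiz
      rcases mul_self_eq_one_iff.mp hzz with h | h
      · exact h1 h
      · exact h2 h
    exact (mul_eq_zero.mp hmul).resolve_left hne
  have key2 : ∀ z ∈ Ω, F₂ (z + z⁻¹) = 0 := by
    intro z hz
    by_cases h1 : z ≠ 1 ∧ z ≠ -1
    · exact key z hz h1.1 h1.2
    · -- z = 1 or z = -1; use continuity
      have hzne := hz0 z hz
      set g : ℂ → ℂ := fun w => F₂ (w + w⁻¹) with hg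
      have hcont : ContinuousAt g z := by
        have h2 : AnalyticAt ℂ (fun w : ℂ => w + w⁻¹) z :=
          analyticAt_id.add (analyticAt_id.inv hzne)
        exact ((hF₂ (z + z⁻¹) (hUim z hz)).comp (x := z) h2).continuousAt
      have hzz : z = 1 ∨ z = -1 := by
        by_contra h
        push_neg at h
        exact h1 h
      have hznm : z ≠ -z := by
        intro h
        have : z = 0 := by linear_combination h / 2
        exact hzne this
      have hev : ∀ᶠ w in 𝓝[≠] z, g w = 0 := by
        have hΩev : ∀ᶠ w in 𝓝 z, w ∈ Ω := hΩopen.eventually_mem hz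
        have hother : ∀ᶠ w in 𝓝 z, w ≠ -z :=
          (isOpen_ne.eventually_mem hznm)
        filter_upwards [eventually_nhdsWithin_of_eventually_nhds (hΩev.and hother),
          self_mem_nhdsWithin] with w hw hwz
        rcases hw with ⟨hwΩ, hwm⟩
        have hwz' : w ≠ z := hwz
        rcases hzz with h | h
        · exact key w hwΩ (h ▸ hwz') (by rw [h] at hwm; simpa using hwm)
        · refine key w hwΩ ?_ (h ▸ hwz')
          rw [h] at hwm; simpa using hwm
      have ht1 : Filter.Tendsto g (𝓝[≠] z) (𝓝 (g z)) :=
        hcont.tendsto.mono_left nhdsWithin_le_nhds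
      have ht2 : Filter.Tendsto g (𝓝[≠] z) (𝓝 0) :=
        Filter.Tendsto.congr' (by filter_upwards [hev] with w hw using hw.symm)
          tendsto_const_nhds
      exact tendsto_nhds_unique ht1 ht2
  intro z hz
  refine ⟨key2 z hz, ?_⟩
  rw [hrep z hz, key2 z hz]
  ring
end
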